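/- Example 1 (the L¹ criterion is strictly stronger than the symmetric Lᵖ criterion): Let n = 2, d_1 = 2, d_2 = 11, a_{11} = a_{22} = 1, a_{12} = a_{21} = 3, b_{ij} = 0 for all i,j, and G_1 = G_2 = F_1 = F_2 = 1. Then: (i) the constants θ_1 = 19, θ_2 = 6 satisfy the strict L¹ inequalities −d_i θ_i + G_i[θ_i|a_{ii}| + Σ_{j≠i} θ_j |a_{ji}|] + F_i Σ_{j=1}^2 θ_j |b_{ji}| < 0 for i = 1, 2; but (ii) for p = q = 2 and α_{ij} = β_{ij} = 1/2 there exist NO positive constants ξ_1, ξ_2 satisfying, for i = 1, 2, the inequalities −d_i ξ_i + G_i[ξ_i|a_{ii}| + (1/2)Σ_{j≠i} ξ_j |a_{ji}|] + (1/2)ξ_i Σ_{j≠i} G_j |a_{ij}| + (1/2)F_i Σ_{j=1}^2 ξ_j |b_{ji}| + (1/2)ξ_i Σ_{j=1}^2 F_j |b_{ij}| < 0. -/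
import Mathlib


open Real Finset

/-- Example 1: for `n = 2`, `d = (2, 11)`, `a = [[1,3],[3,1]]`, `b = 0`,
`G = F = (1,1)`:
(i) the constants `θ = (19, 6)` satisfy the strict `L¹` inequalities
`-d_i θ_i + G_i[θ_i|a_{ii}| + ∑_{j≠i} θ_j |a_{ji}|] + F_i ∑_j θ_j |b_{ji}| < 0`;
(ii) for `p = q = 2` and `α_{ij} = β_{ij} = 1/2` there are NO positive constants
`ξ_1, ξ_2` satisfying the corresponding symmetric `L²` inequalities. -/
theorem example1
    (d : Fin 2 → ℝ) (hd : d = ![2, 11])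
    (a : Fin 2 → Fin 2 → ℝ) (ha : a = ![![1, 3], ![3, 1]])
    (b : Fin 2 → Fin 2 → ℝ) (hb : b = fun _ _ => 0)
    (G F : Fin 2 → ℝ) (hG : G = ![1, 1]) (hF : F = ![1, 1])
    (θ : Fin 2 → ℝ) (hθ : θ = ![19, 6]) :
    (∀ i,
      -d i * θ i
        + G i * (θ i * |a i i| + ∑ j ∈ univ.erase i, θ j * |a j i|)
        + F i * ∑ j, θ j * |b j i| < 0) ∧
    ¬ ∃ ξ : Fin 2 → ℝ, (∀ i, 0 < ξ i) ∧ ∀ i,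
      -d i * ξ i
        + G i * (ξ i * |a i i| + (1 / 2) * ∑ j ∈ univ.erase i, ξ j * |a j i|)
        + (1 / 2) * ξ i * ∑ j ∈ univ.erase i, G j * |a i j|
        + (1 / 2) * F i * ∑ j, ξ j * |b j i|
        + (1 / 2) * ξ i * ∑ j, F j * |b i j| < 0 := by
  subst hd ha hb hG hF hθ
  have e0 : (univ.erase (0:Fin 2)) = {1} := by decide
  have e1 : (univ.erase (1:Fin 2)) = {0} := by decide
  constructor
  · intro i
    fin_cases i <;>
      norm_num [e0, e1, Fin.sum_univ_two, abs_of_nonneg]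
  · rintro ⟨ξ, hpos, h⟩
    have h0 := h 0
    have p0 := hpos 0
    have p1 := hpos 1
    simp only [e0, Fin.sum_univ_two] at h0
    norm_num [abs_of_nonneg] at h0
    nlinarith
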